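/- Define h : ℝ² → [0,∞) by h(z) := √((z₁ − 2)² + (z₂ − 1)²). Then opt_h((0,0),(6,5)) = (1/2)·ln(√2 − 1) − (1/2)·ln(√5 − 2) − 1/√2 + √5 + 17·√2. -/

import Mathlib

/-- An `(x,y)`-path: a function `f : [x₁+x₂, y₁+y₂] → ℝ` with `f(x₁+x₂) = x₁`,
`f(y₁+y₂) = y₁` such that both `f` and `s ↦ s − f s` are monotone non-decreasing;
it encodes the monotone unit-`ℓ¹`-speed curve `s ↦ (f s, s − f s)` from `x` to `y`. -/
def IsPath (x y : ℝ × ℝ) (f : ℝ → ℝ) : Prop :=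
  x.1 ≤ y.1 ∧ x.2 ≤ y.2 ∧
  f (x.1 + x.2) = x.1 ∧ f (y.1 + y.2) = y.1 ∧
  MonotoneOn f (Set.Icc (x.1 + x.2) (y.1 + y.2)) ∧
  MonotoneOn (fun s => s - f s) (Set.Icc (x.1 + x.2) (y.1 + y.2))

/-- The cost of an `(x,y)`-path `f` with respect to `h`. -/
noncomputable def pathCost (h : ℝ × ℝ → ℝ) (x y : ℝ × ℝ) (f : ℝ → ℝ) : ℝ :=
  ∫ s in (x.1 + x.2)..(y.1 + y.2), h (f s, s - f s)

/-- `opt_h(x,y)`: the infimum of the costs of all `(x,y)`-paths. -/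
noncomputable def optCost (h : ℝ × ℝ → ℝ) (x y : ℝ × ℝ) : ℝ :=
  sInf (pathCost h x y '' {f : ℝ → ℝ | IsPath x y f})

open Real MeasureTheory Set intervalIntegral


noncomputable def Fa (s : ℝ) : ℝ :=
  ((s - 2) * Real.sqrt ((s - 2) ^ 2 + 1) + Real.arsinh (s - 2)) / 2

lemma hFa (s : ℝ) : HasDerivAt Fa (Real.sqrt ((s - 2) ^ 2 + 1)) s := by
  have hpos : (0:ℝ) < (s - 2) ^ 2 + 1 := by positivity
  have hrpos : 0 < Real.sqrt ((s - 2) ^ 2 + 1) := Real.sqrt_pos.2 hpos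
  have hu : HasDerivAt (fun t : ℝ => t - 2) 1 s := (hasDerivAt_id s).sub_const 2
  have hq : HasDerivAt (fun t : ℝ => (t - 2) ^ 2 + 1) (2 * (s - 2)) s := by
    have := ((hu.pow 2).add_const 1)
    simpa using this
  have hsq : HasDerivAt (fun t : ℝ => Real.sqrt ((t - 2) ^ 2 + 1))
      (1 / (2 * Real.sqrt ((s - 2) ^ 2 + 1)) * (2 * (s - 2))) s :=
    (Real.hasDerivAt_sqrt hpos.ne').comp s hq
  have hars : HasDerivAt (fun t : ℝ => Real.arsinh (t - 2))
      ((Real.sqrt (1 + (s - 2) ^ 2))⁻¹ * 1) s :=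
    (Real.hasDerivAt_arsinh (s - 2)).comp (h₂ := Real.arsinh) s hu
  have h1 : HasDerivAt Fa
      ((1 * Real.sqrt ((s - 2) ^ 2 + 1) +
        (s - 2) * (1 / (2 * Real.sqrt ((s - 2) ^ 2 + 1)) * (2 * (s - 2))) +
        (Real.sqrt (1 + (s - 2) ^ 2))⁻¹ * 1) / 2) s :=
    ((hu.mul hsq).add hars).div_const 2
  convert h1 using 1
  rw [add_comm (1:ℝ) ((s-2)^2)]
  have hr2 : Real.sqrt ((s - 2) ^ 2 + 1) ^ 2 = (s - 2) ^ 2 + 1 :=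
    Real.sq_sqrt hpos.le
  field_simp
  nlinarith [hr2, hrpos]

lemma cont_sq : Continuous (fun s : ℝ => Real.sqrt ((s - 2) ^ 2 + 1)) := by
  continuity

lemma int_sq (a b : ℝ) :
    ∫ s in a..b, Real.sqrt ((s - 2) ^ 2 + 1) = Fa b - Fa a :=
  integral_eq_sub_of_hasDerivAt (fun s _ => hFa s) (cont_sq.intervalIntegrable a b)

/-- The pointwise lower envelope. -/
noncomputable def ga (s : ℝ) : ℝ :=
  if s ≤ 1 then Real.sqrt ((s - 2) ^ 2 + 1) else |s - 3| / Real.sqrt 2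

lemma sqrt2_pos : (0:ℝ) < Real.sqrt 2 := Real.sqrt_pos.2 (by norm_num)

lemma ga_junction : Real.sqrt (((1:ℝ) - 2) ^ 2 + 1) = |(1:ℝ) - 3| / Real.sqrt 2 := by
  have h2 : Real.sqrt 2 * Real.sqrt 2 = 2 := Real.mul_self_sqrt (by norm_num)
  have h3 : |(1:ℝ) - 3| = 2 := by norm_num
  rw [h3, show ((1:ℝ) - 2) ^ 2 + 1 = 2 by norm_num, eq_div_iff sqrt2_pos.ne', h2]

lemma ga_cont : Continuous ga := by
  apply Continuous.if_le cont_sq (by fun_prop) continuous_id continuous_const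
  intro x hx
  subst hx
  exact ga_junction

/-- The optimal path. -/
noncomputable def f0 (s : ℝ) : ℝ := if s ≤ 1 then s else (s + 1) / 2

lemma f0_mono : Monotone f0 := by
  intro a b hab
  unfold f0
  split_ifs with h1 h2
  · exact hab
  · push_neg at h2; linarith
  · linarith [not_le.1 h1]
  · linarith

lemma f0_comp_mono : Monotone (fun s => s - f0 s) := by
  intro a b hab
  simp only [f0]
  split_ifs with h1 h2
  · simp
  · push_neg at h2; nlinarith
  · linarith [not_le.1 h1]
  · linarith

lemma f0_isPath : IsPath ((0:ℝ), (0:ℝ)) ((6:ℝ), (5:ℝ)) f0 := by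
  refine ⟨by norm_num, by norm_num, ?_, ?_, (f0_mono.monotoneOn _), (f0_comp_mono.monotoneOn _)⟩
  · show f0 (0 + 0) = 0
    norm_num [f0]
  · show f0 (6 + 5) = 6
    norm_num [f0]

lemma f0_integrand (s : ℝ) :
    Real.sqrt ((f0 s - 2) ^ 2 + (s - f0 s - 1) ^ 2) = ga s := by
  unfold f0 ga
  split_ifs with h
  · ring_nf
  · have : ((s + 1) / 2 - 2) ^ 2 + (s - (s + 1) / 2 - 1) ^ 2 = (s - 3) ^ 2 / 2 := by ring
    rw [this, Real.sqrt_div (sq_nonneg _), Real.sqrt_sq_eq_abs]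

lemma integral_ga : ∫ s in (0:ℝ)..11, ga s
    = 1 / 2 * Real.log (Real.sqrt 2 - 1) - 1 / 2 * Real.log (Real.sqrt 5 - 2)
        - 1 / Real.sqrt 2 + Real.sqrt 5 + 17 * Real.sqrt 2 := by
  have h2 : Real.sqrt 2 * Real.sqrt 2 = 2 := Real.mul_self_sqrt (by norm_num)
  have hsplit : ∫ s in (0:ℝ)..11, ga s
      = (∫ s in (0:ℝ)..1, ga s) + ∫ s in (1:ℝ)..11, ga s :=
    (integral_add_adjacent_intervals (ga_cont.intervalIntegrable _ _)
      (ga_cont.intervalIntegrable _ _)).symm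
  have h01 : ∫ s in (0:ℝ)..1, ga s = ∫ s in (0:ℝ)..1, Real.sqrt ((s - 2) ^ 2 + 1) := by
    apply integral_congr
    intro s hs
    rw [uIcc_of_le (by norm_num : (0:ℝ) ≤ 1)] at hs
    simp [ga, hs.2]
  have h111 : ∫ s in (1:ℝ)..11, ga s = ∫ s in (1:ℝ)..11, |s - 3| / Real.sqrt 2 := by
    apply integral_congr
    intro s hs
    rw [uIcc_of_le (by norm_num : (1:ℝ) ≤ 11)] at hs
    unfold ga
    split_ifs with h
    · have : s = 1 := le_antisymm h hs.1
      subst this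
      exact ga_junction
    · rfl
  have habs : ∫ s in (1:ℝ)..11, |s - 3| = 34 := by
    have hs1 : ∫ s in (1:ℝ)..3, |s - 3| = ∫ s in (1:ℝ)..3, (3 - s) := by
      apply integral_congr
      intro s hs
      rw [uIcc_of_le (by norm_num : (1:ℝ) ≤ 3)] at hs
      show |s - 3| = 3 - s
      rw [abs_of_nonpos (by linarith [hs.2])]
      ring
    have hs2 : ∫ s in (3:ℝ)..11, |s - 3| = ∫ s in (3:ℝ)..11, (s - 3) := by
      apply integral_congr
      intro s hs
      rw [uIcc_of_le (by norm_num : (3:ℝ) ≤ 11)] at hs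
      show |s - 3| = s - 3
      rw [abs_of_nonneg (by linarith [hs.1])]
    have v1 : ∫ s in (1:ℝ)..3, (3 - s) = 2 := by
      rw [integral_sub ((continuous_const).intervalIntegrable _ _)
        ((by continuity : Continuous fun s : ℝ => s).intervalIntegrable _ _)]
      simp [integral_id]
      norm_num
    have v2 : ∫ s in (3:ℝ)..11, (s - 3) = 32 := by
      rw [integral_sub ((by continuity : Continuous fun s : ℝ => s).intervalIntegrable _ _)
        ((continuous_const).intervalIntegrable _ _)]
      simp [integral_id]
      norm_num
    have := integral_add_adjacent_intervals
      (((continuous_abs.comp (by fun_prop : Continuous fun s : ℝ => s - 3)).intervalIntegrable (1:ℝ) 3 :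
        IntervalIntegrable (fun s : ℝ => |s - 3|) volume 1 3))
      (((continuous_abs.comp (by fun_prop : Continuous fun s : ℝ => s - 3)).intervalIntegrable (3:ℝ) 11 :
        IntervalIntegrable (fun s : ℝ => |s - 3|) volume 3 11))
    simp only [Function.comp_def] at this
    rw [← this, hs1, hs2, v1, v2]
    norm_num
  have harsinh1 : Real.arsinh (-1) = Real.log (Real.sqrt 2 - 1) := by
    rw [Real.arsinh]
    norm_num
    ring_nf
  have harsinh2 : Real.arsinh (-2) = Real.log (Real.sqrt 5 - 2) := by
    rw [Real.arsinh]
    norm_num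
    ring_nf
  have hF1 : Fa 1 - Fa 0 = 1 / 2 * Real.log (Real.sqrt 2 - 1)
      - 1 / 2 * Real.log (Real.sqrt 5 - 2) - 1 / Real.sqrt 2 + Real.sqrt 5 := by
    unfold Fa
    norm_num
    rw [show Real.arsinh 1 = -Real.log (Real.sqrt 2 - 1) by
          rw [← harsinh1, ← Real.arsinh_neg]; norm_num,
        show Real.arsinh 2 = -Real.log (Real.sqrt 5 - 2) by
          rw [← harsinh2, ← Real.arsinh_neg]; norm_num]
    have hinv : (Real.sqrt 2)⁻¹ = Real.sqrt 2 / 2 := by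
      rw [eq_div_iff (two_ne_zero), inv_mul_eq_div, div_eq_iff sqrt2_pos.ne', h2]
    rw [hinv]
    ring
  have h2' : (2:ℝ) ≤ 2 := le_refl 2
  have h17 : (34:ℝ) / Real.sqrt 2 = 17 * Real.sqrt 2 := by
    rw [div_eq_iff sqrt2_pos.ne']
    nlinarith [h2]
  rw [hsplit, h01, h111, int_sq, intervalIntegral.integral_div, habs, hF1, h17]

lemma cost_f0 : pathCost (fun z : ℝ × ℝ => Real.sqrt ((z.1 - 2) ^ 2 + (z.2 - 1) ^ 2))
    ((0 : ℝ), (0 : ℝ)) ((6 : ℝ), (5 : ℝ)) f0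
    = 1 / 2 * Real.log (Real.sqrt 2 - 1) - 1 / 2 * Real.log (Real.sqrt 5 - 2)
        - 1 / Real.sqrt 2 + Real.sqrt 5 + 17 * Real.sqrt 2 := by
  rw [← integral_ga]
  unfold pathCost
  norm_num
  apply integral_congr
  intro s _
  exact f0_integrand s

lemma pointwise_lb {a s : ℝ} (ha0 : 0 ≤ a) (hb0 : 0 ≤ s - a) :
    ga s ≤ Real.sqrt ((a - 2) ^ 2 + (s - a - 1) ^ 2) := by
  unfold ga
  split_ifs with h
  · apply Real.sqrt_le_sqrt
    nlinarith [mul_nonneg hb0 (by linarith : (0:ℝ) ≤ 1 - a)]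
  · rw [show |s - 3| / Real.sqrt 2 = Real.sqrt ((s - 3) ^ 2 / 2) by
      rw [Real.sqrt_div (sq_nonneg _), Real.sqrt_sq_eq_abs,
        show (2:ℝ) = Real.sqrt 2 * Real.sqrt 2 from (Real.mul_self_sqrt (by norm_num)).symm,
        Real.sqrt_mul_self sqrt2_pos.le]]
    apply Real.sqrt_le_sqrt
    nlinarith [sq_nonneg ((a - 2) - (s - a - 1))]

lemma cost_lb (f : ℝ → ℝ) (hf : IsPath ((0 : ℝ), (0 : ℝ)) ((6 : ℝ), (5 : ℝ)) f) :
    1 / 2 * Real.log (Real.sqrt 2 - 1) - 1 / 2 * Real.log (Real.sqrt 5 - 2)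
        - 1 / Real.sqrt 2 + Real.sqrt 5 + 17 * Real.sqrt 2
    ≤ pathCost (fun z : ℝ × ℝ => Real.sqrt ((z.1 - 2) ^ 2 + (z.2 - 1) ^ 2))
        ((0 : ℝ), (0 : ℝ)) ((6 : ℝ), (5 : ℝ)) f := by
  obtain ⟨-, -, h0, h11, hm, hm'⟩ := hf
  norm_num at h0 h11 hm hm'
  have hbound : ∀ s ∈ Icc (0:ℝ) 11, 0 ≤ f s ∧ f s ≤ 6 ∧ 0 ≤ s - f s ∧ s - f s ≤ 5 := by
    intro s hs
    have h1 := hm (left_mem_Icc.2 (by norm_num)) hs hs.1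
    have h2 := hm hs (right_mem_Icc.2 (by norm_num)) hs.2
    have h3 := hm' (left_mem_Icc.2 (by norm_num)) hs hs.1
    have h4 := hm' hs (right_mem_Icc.2 (by norm_num)) hs.2
    simp only [h0, h11] at h1 h2 h3 h4
    refine ⟨by linarith, by linarith, by linarith, by linarith⟩
  have hmeas : AEMeasurable f (volume.restrict (Ioc (0:ℝ) 11)) :=
    (aemeasurable_restrict_of_monotoneOn measurableSet_Icc hm).mono_measure
      (Measure.restrict_mono Ioc_subset_Icc_self le_rfl)
  have hinteg : IntervalIntegrable
      (fun s => Real.sqrt ((f s - 2) ^ 2 + (s - f s - 1) ^ 2)) volume 0 11 := by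
    rw [intervalIntegrable_iff, uIoc_of_le (by norm_num : (0:ℝ) ≤ 11)]
    have ha1 : AEMeasurable (fun s => f s - 2) (volume.restrict (Ioc (0:ℝ) 11)) :=
      hmeas.sub aemeasurable_const
    have ha2 : AEMeasurable (fun s : ℝ => s - f s - 1) (volume.restrict (Ioc (0:ℝ) 11)) :=
      (aemeasurable_id.sub hmeas).sub aemeasurable_const
    have haem : AEMeasurable (fun s => (f s - 2) ^ 2 + (s - f s - 1) ^ 2)
        (volume.restrict (Ioc (0:ℝ) 11)) := (ha1.pow_const 2).add (ha2.pow_const 2)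
    have hsm := (Real.continuous_sqrt.measurable.comp_aemeasurable haem).aestronglyMeasurable
    refine Integrable.mono' (g := fun _ => Real.sqrt 32)
      (integrableOn_const measure_Ioc_lt_top.ne) hsm ?_
    filter_upwards [ae_restrict_mem measurableSet_Ioc] with s hs
    obtain ⟨hA, hB, hC, hD⟩ := hbound s (Ioc_subset_Icc_self hs)
    rw [Real.norm_eq_abs, abs_of_nonneg (Real.sqrt_nonneg _)]
    apply Real.sqrt_le_sqrt
    nlinarith
  rw [← integral_ga]
  unfold pathCost
  norm_num
  apply integral_mono_on (by norm_num) (ga_cont.intervalIntegrable _ _) hinteg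
  intro s hs
  exact pointwise_lb (hbound s hs).1 (hbound s hs).2.2.1

/-- For `h(z) = √((z₁ − 2)² + (z₂ − 1)²)` one has
`opt_h((0,0),(6,5)) = (1/2)·ln(√2 − 1) − (1/2)·ln(√5 − 2) − 1/√2 + √5 + 17·√2`. -/
theorem optCost_example :
    optCost (fun z : ℝ × ℝ => Real.sqrt ((z.1 - 2) ^ 2 + (z.2 - 1) ^ 2))
        ((0 : ℝ), (0 : ℝ)) ((6 : ℝ), (5 : ℝ))
      = 1 / 2 * Real.log (Real.sqrt 2 - 1) - 1 / 2 * Real.log (Real.sqrt 5 - 2)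
        - 1 / Real.sqrt 2 + Real.sqrt 5 + 17 * Real.sqrt 2 := by
  unfold optCost
  have hmem : (1 / 2 * Real.log (Real.sqrt 2 - 1) - 1 / 2 * Real.log (Real.sqrt 5 - 2)
      - 1 / Real.sqrt 2 + Real.sqrt 5 + 17 * Real.sqrt 2)
      ∈ pathCost (fun z : ℝ × ℝ => Real.sqrt ((z.1 - 2) ^ 2 + (z.2 - 1) ^ 2))
        ((0 : ℝ), (0 : ℝ)) ((6 : ℝ), (5 : ℝ)) '' {f : ℝ → ℝ | IsPath ((0:ℝ),(0:ℝ)) ((6:ℝ),(5:ℝ)) f} :=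
    ⟨f0, f0_isPath, cost_f0⟩
  have hlb : ∀ x ∈ pathCost (fun z : ℝ × ℝ => Real.sqrt ((z.1 - 2) ^ 2 + (z.2 - 1) ^ 2))
        ((0 : ℝ), (0 : ℝ)) ((6 : ℝ), (5 : ℝ)) '' {f : ℝ → ℝ | IsPath ((0:ℝ),(0:ℝ)) ((6:ℝ),(5:ℝ)) f},
      1 / 2 * Real.log (Real.sqrt 2 - 1) - 1 / 2 * Real.log (Real.sqrt 5 - 2)
        - 1 / Real.sqrt 2 + Real.sqrt 5 + 17 * Real.sqrt 2 ≤ x := by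
    rintro x ⟨f, hf, rfl⟩
    exact cost_lb f hf
  exact le_antisymm (csInf_le ⟨_, hlb⟩ hmem) (le_csInf ⟨_, hmem⟩ hlb)
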